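/- Let p ≥ 3 be prime. If s is a positive integer with s ≡ 1 (mod p-1) and t = v_p(s-1) is the p-adic valuation of s-1, then for all i ≥ 2, p^i · C(s,i) ≡ 0 (mod p^{t+2}). -/

import Mathlib

theorem stmt_3 (p s : ℕ) (hp : p.Prime) (hp3 : 3 ≤ p) (hs : 1 ≤ s)
    (hs1 : s ≡ 1 [MOD p - 1]) (t : ℕ) (ht : t = padicValNat p (s - 1)) :
    ∀ i : ℕ, 2 ≤ i → (p : ℤ)^(t + 2) ∣ (p : ℤ)^i * (s.choose i : ℤ) := by
  haveI : Fact p.Prime := ⟨hp⟩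
  intro i hi
  rcases eq_or_lt_of_le hs with h1 | h2
  · -- s = 1
    rw [← h1, Nat.choose_eq_zero_of_lt (by omega)]
    simp
  rcases Nat.eq_zero_or_pos (s.choose i) with hc | hc
  · simp [hc]
  suffices h : p ^ (t + 2) ∣ p ^ i * s.choose i by exact_mod_cast Int.natCast_dvd_natCast.mpr h
  -- key identity: s.choose i * (i * (i-1)) = s * (s-1) * ((s-2).choose (i-2))
  obtain ⟨m, rfl⟩ : ∃ m, s = m + 2 := ⟨s - 2, by omega⟩
  obtain ⟨j, rfl⟩ : ∃ j, i = j + 2 := ⟨i - 2, by omega⟩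
  have key : (m + 2).choose (j + 2) * ((j + 2) * (j + 1))
      = (m + 2) * ((m + 1) * m.choose j) := by
    have h1 := Nat.add_one_mul_choose_eq (m + 1) (j + 1)
    have h2 := Nat.add_one_mul_choose_eq m j
    calc (m + 2).choose (j + 2) * ((j + 2) * (j + 1))
        = ((m + 1 + 1).choose (j + 1 + 1) * (j + 1 + 1)) * (j + 1) := by ring
      _ = ((m + 2) * (m + 1).choose (j + 1)) * (j + 1) := by rw [← h1]
      _ = (m + 2) * ((m + 1).choose (j + 1) * (j + 1)) := by ring
      _ = (m + 2) * ((m + 1) * m.choose j) := by rw [← h2]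
  have hdvd : (m + 1) ∣ (m + 2).choose (j + 2) * ((j + 2) * (j + 1)) := by
    rw [key]; exact Dvd.dvd.mul_left (Dvd.dvd.mul_right dvd_rfl _) _
  have hs1' : (m + 2) - 1 = m + 1 := by omega
  rw [hs1'] at ht
  -- t ≤ v_p(C) + v_p(j+2) + v_p(j+1)
  have ht_le : t ≤ padicValNat p ((m + 2).choose (j + 2)) + padicValNat p (j + 2)
      + padicValNat p (j + 1) := by
    have hpt : p ^ t ∣ (m + 2).choose (j + 2) * ((j + 2) * (j + 1)) :=
      dvd_trans (ht ▸ pow_padicValNat_dvd) hdvd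
    have hne : (m + 2).choose (j + 2) * ((j + 2) * (j + 1)) ≠ 0 := by positivity
    have := (padicValNat_dvd_iff_le hne).mp hpt
    rwa [padicValNat.mul (by omega) (by positivity),
      padicValNat.mul (by omega) (by omega), ← add_assoc] at this
  -- v_p(j+2) + v_p(j+1) ≤ j
  have hval : padicValNat p (j + 2) + padicValNat p (j + 1) ≤ j := by
    have hcop : ¬ (p ∣ (j + 2) ∧ p ∣ (j + 1)) := by
      rintro ⟨h1, h2⟩
      have h3 : p ∣ (j + 2) - (j + 1) := Nat.dvd_sub h1 h2
      simp at h3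
      omega
    have bound : ∀ n : ℕ, 0 < n → p ^ padicValNat p n ≤ n := fun n hn =>
      Nat.le_of_dvd hn pow_padicValNat_dvd
    have pow_ge : ∀ v : ℕ, v + 2 ≤ p ^ v ∨ v = 0 := by
      intro v
      rcases Nat.eq_zero_or_pos v with rfl | hv
      · right; rfl
      · left
        have h3 : 3 ^ v ≤ p ^ v := Nat.pow_le_pow_left hp3 v
        have h33 : ∀ w : ℕ, w + 2 ≤ 3 ^ w ∨ w = 0 := by
          intro w
          induction w with
          | zero => right; rfl
          | succ k ih =>
            left
            rcases ih with ih | rfl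
            · calc k + 1 + 2 ≤ 3 * (k + 2) := by omega
                _ ≤ 3 * 3 ^ k := by omega
                _ = 3 ^ (k + 1) := by ring
            · norm_num
        rcases h33 v with h | rfl
        · omega
        · omega
    rcases Nat.eq_zero_or_pos (padicValNat p (j + 2)) with h0 | hpos
    · rw [h0, zero_add]
      rcases pow_ge (padicValNat p (j + 1)) with h | h
      · have := bound (j + 1) (by omega); omega
      · omega
    · have h1 : p ∣ (j + 2) := dvd_of_one_le_padicValNat hpos
      have h0' : padicValNat p (j + 1) = 0 := by
        by_contra h
        exact hcop ⟨h1, dvd_of_one_le_padicValNat (by omega)⟩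
      rw [h0', add_zero]
      rcases pow_ge (padicValNat p (j + 2)) with h | h
      · have := bound (j + 2) (by omega); omega
      · omega
  -- conclude
  rw [padicValNat_dvd_iff_le (by positivity),
    padicValNat.mul (pow_ne_zero _ (by omega)) (by omega), padicValNat.prime_pow]
  omega
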